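/- arXiv:1905.09513 — 2 statements merged into one kernel-verified Lean document; each statement's English description precedes it below -/
import Mathlib

section
/- Let n ≥ 1 be an integer and suppose 0 < β < α ≤ n. Then for every Lebesgue measurable function F : ℝⁿ → [0,∞) one has M_α F ≤ M_β F. -/
open MeasureTheory Metric Real
open scoped ENNReal

noncomputable section

abbrev Esp (n : ℕ) := EuclideanSpace ℝ (Fin n)

/-- Surface measure on the unit sphere in `ℝⁿ`. -/
def sphσ (n : ℕ) : Measure (Esp n) :=
  (μH[(n : ℝ) - 1]).restrict (sphere (0 : Esp n) 1)

/-- The Fourier extension operator of the unit sphere. -/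
def extOp (n : ℕ) (f : Esp n → ℂ) (x : Esp n) : ℂ :=
  ∫ ξ, Complex.exp (((-2 * π * (inner ℝ x ξ : ℝ) : ℝ) : ℂ) * Complex.I) * f ξ ∂(sphσ n)

/-- Admissible constants in the definition of `A_α(H)`. -/
def weightBnds {n : ℕ} (α : ℝ) (H : Esp n → ℝ) : Set ℝ :=
  {C : ℝ | 0 ≤ C ∧ ∀ (x₀ : Esp n) (R : ℝ), 1 ≤ R →
    (∫ x in closedBall x₀ R, H x) ≤ C * R ^ α}

/-- `H : ℝⁿ → [0,1]` is a weight of fractal dimension `α`. -/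
def IsWeight {n : ℕ} (α : ℝ) (H : Esp n → ℝ) : Prop :=
  Measurable H ∧ (∀ x, 0 ≤ H x ∧ H x ≤ 1) ∧ (weightBnds α H).Nonempty

/-- `A_α(H)`. -/
def wA {n : ℕ} (α : ℝ) (H : Esp n → ℝ) : ℝ :=
  sInf (weightBnds α H)

/-- The `L^p` norm with respect to the surface measure of the sphere. -/
def spLp (n : ℕ) (p : ℝ≥0∞) (f : Esp n → ℂ) : ℝ :=
  (eLpNorm f p (sphσ n)).toReal

/-- `M_α F`: the weighted maximal quantity from the paper, valued in `ℝ≥0∞`. -/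
def fracM (n : ℕ) (α : ℝ) (F : Esp n → ℝ) : ℝ≥0∞ :=
  (⨆ (H : Esp n → ℝ) (_ : IsWeight α H ∧ H ≠ 0),
      (∫⁻ x, ENNReal.ofReal (F x ^ α * H x)) / ENNReal.ofReal (wA α H)) ^ (1 / α)

namespace StmtAux

/-- The infimum `A_α(H)` is itself an admissible constant. -/
lemma wA_mem {n : ℕ} {α : ℝ} {H : Esp n → ℝ} (h : IsWeight α H) :
    wA α H ∈ weightBnds α H := by
  obtain ⟨-, -, C, hC⟩ := h
  refine ⟨le_csInf ⟨C, hC⟩ fun c hc => hc.1, fun x₀ R hR => ?_⟩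
  have hRpos : (0:ℝ) < R ^ α := Real.rpow_pos_of_pos (lt_of_lt_of_le one_pos hR) α
  have hlb : (∫ x in closedBall x₀ R, H x) / R ^ α ≤ sInf (weightBnds α H) :=
    le_csInf ⟨C, hC⟩ fun c hc => (div_le_iff₀ hRpos).2 (hc.2 x₀ R hR)
  exact (div_le_iff₀ hRpos).1 hlb

lemma integrableOn_ball {n : ℕ} {H : Esp n → ℝ} (hm : Measurable H)
    (h01 : ∀ x, 0 ≤ H x ∧ H x ≤ 1) {s : Set (Esp n)} (x₀ : Esp n) (R : ℝ)
    (hs : s ⊆ closedBall x₀ R) : IntegrableOn H s := by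
  have h : IntegrableOn H (closedBall x₀ R) := by
    refine Integrable.mono' (g := fun _ => (1:ℝ))
      (integrableOn_const measure_closedBall_lt_top.ne) hm.aestronglyMeasurable ?_
    filter_upwards with x
    rw [Real.norm_eq_abs, abs_le]
    exact ⟨by linarith [(h01 x).1], (h01 x).2⟩
  exact h.mono_set hs

lemma div_le_extract {N d S : ℝ≥0∞} (hd : d ≠ ∞) (hS : S ≠ ∞) (h : N / d ≤ S) :
    N ≤ S * d := by
  rcases eq_or_ne d 0 with rfl | hd0
  · rcases eq_or_ne N 0 with rfl | hN0
    · simp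
    · rw [ENNReal.div_zero hN0] at h
      exact absurd (top_le_iff.1 h) hS
  · exact (ENNReal.div_le_iff_le_mul (Or.inl hd0) (Or.inl hd)).1 h

lemma le_of_le_rpow {v A c : ℝ} (hv : 0 < v) (hA : 0 ≤ A) (hc : 0 < c) (hc1 : c < 1)
    (h : v ≤ A ^ c * v ^ (1 - c)) : v ≤ A := by
  have h2 : (0:ℝ) < v ^ (1-c) := Real.rpow_pos_of_pos hv _
  have hvc : v ^ c ≤ A ^ c := by
    have h1 : v ^ c * v ^ (1-c) = v := by
      rw [← Real.rpow_add hv]; norm_num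
    have h3 : v ^ c * v ^ (1-c) ≤ A ^ c * v ^ (1-c) := by rw [h1]; exact h
    exact le_of_mul_le_mul_right h3 h2
  have h4 := Real.rpow_le_rpow (Real.rpow_nonneg hv.le c) hvc (inv_nonneg.2 hc.le)
  rwa [← Real.rpow_mul hv.le, ← Real.rpow_mul hA, mul_inv_cancel₀ hc.ne',
    Real.rpow_one, Real.rpow_one] at h4

lemma core {n : ℕ} {α β : ℝ} (hβ : 0 < β) (hβα : β < α)
    {F H : Esp n → ℝ} (hFm : Measurable F) (hF0 : ∀ x, 0 ≤ F x)
    (hW : IsWeight α H) {S : ℝ≥0∞} (hS : S ≠ ∞)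
    (hSle : ∀ G : Esp n → ℝ, IsWeight β G → G ≠ 0 →
      (∫⁻ x, ENNReal.ofReal (F x ^ β * G x)) / ENNReal.ofReal (wA β G) ≤ S)
    {t : ℝ} (ht : 0 < t) (htS : S < ENNReal.ofReal (t ^ β)) :
    (∫⁻ x, ENNReal.ofReal (F x ^ α * H x)) ≤
      ENNReal.ofReal (wA α H) * ENNReal.ofReal (t ^ α) := by
  have hα : 0 < α := hβ.trans hβα
  have hab : 0 < α - β := by linarith
  have hHmeas : Measurable H := hW.1
  have hH01 : ∀ x, 0 ≤ H x ∧ H x ≤ 1 := hW.2.1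
  set A := wA α H with hAdef
  have hAmem : A ∈ weightBnds α H := wA_mem hW
  have hA0 : 0 ≤ A := hAmem.1
  set m : Esp n → ℝ := fun x => min (F x) t with hmdef
  have hm0 : ∀ x, 0 ≤ m x := fun x => le_min (hF0 x) ht.le
  have hmt : ∀ x, m x ≤ t := fun x => min_le_right _ _
  have hmF : ∀ x, m x ≤ F x := fun x => min_le_left _ _
  have hmmeas : Measurable m := hFm.min measurable_const
  have htα : (0:ℝ) < t ^ α := Real.rpow_pos_of_pos ht α
  have htβ : (0:ℝ) < t ^ β := Real.rpow_pos_of_pos ht β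
  have htab : (0:ℝ) < t ^ (α - β) := Real.rpow_pos_of_pos ht _
  -- Step K1 : a.e. either H = 0 or F ≤ t
  have hK1 : ∀ᵐ x : Esp n, H x = 0 ∨ F x ≤ t := by
    by_contra hcon
    rw [MeasureTheory.ae_iff] at hcon
    set Z : Set (Esp n) := {a | H a ≠ 0} ∩ {a | t < F a} with hZdef
    have hZeq : {a : Esp n | ¬ (H a = 0 ∨ F a ≤ t)} = Z := by
      ext x
      simp [hZdef, not_or, not_le]
    rw [hZeq] at hcon
    have hZmeas : MeasurableSet Z :=
      ((hHmeas (measurableSet_singleton 0)).compl).inter (measurableSet_lt measurable_const hFm)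
    obtain ⟨k, hk⟩ : ∃ k : ℕ, volume (Z ∩ closedBall (0:Esp n) (k+1)) ≠ 0 := by
      by_contra hall
      push_neg at hall
      apply hcon
      have hZsub : Z ⊆ ⋃ k : ℕ, Z ∩ closedBall (0:Esp n) (k+1) := by
        intro x hx
        obtain ⟨k, hk⟩ := exists_nat_ge ‖x‖
        refine Set.mem_iUnion.2 ⟨k, hx, Metric.mem_closedBall.2 ?_⟩
        rw [dist_zero_right]
        linarith
      exact measure_mono_null hZsub (measure_iUnion_null fun k => hall k)
    set ZB : Set (Esp n) := Z ∩ closedBall (0:Esp n) (k+1) with hZBdef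
    have hZBmeas : MeasurableSet ZB := hZmeas.inter measurableSet_closedBall
    set G : Esp n → ℝ := ZB.indicator H with hGdef
    have hGmeas : Measurable G := hHmeas.indicator hZBmeas
    have hG01 : ∀ x, 0 ≤ G x ∧ G x ≤ 1 := by
      intro x
      by_cases hx : x ∈ ZB
      · rw [hGdef, Set.indicator_of_mem hx]; exact hH01 x
      · rw [hGdef, Set.indicator_of_notMem hx]; exact ⟨le_rfl, zero_le_one⟩
    have hGint : Integrable G := by
      rw [hGdef, integrable_indicator_iff hZBmeas]
      exact integrableOn_ball hHmeas hH01 0 (k+1) Set.inter_subset_right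
    have hGnn : 0 ≤ᵐ[volume] G := Filter.Eventually.of_forall fun x => (hG01 x).1
    set M : ℝ := ∫ x, G x with hMdef
    have hMof : ENNReal.ofReal M = ∫⁻ x, ENNReal.ofReal (G x) :=
      ofReal_integral_eq_lintegral_ofReal hGint hGnn
    have hlpos : 0 < ∫⁻ x, ENNReal.ofReal (G x) := by
      rw [lintegral_pos_iff_support hGmeas.ennreal_ofReal]
      refine lt_of_lt_of_le (pos_iff_ne_zero.2 hk) (measure_mono ?_)
      intro x hx
      have hGx : 0 < G x := by
        rw [hGdef, Set.indicator_of_mem hx]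
        exact lt_of_le_of_ne (hH01 x).1 (Ne.symm hx.1.1)
      simp only [Function.mem_support, ne_eq, ENNReal.ofReal_eq_zero, not_le]
      exact hGx
    have hMpos : 0 < M := ENNReal.ofReal_pos.1 (by rw [hMof]; exact hlpos)
    have hMM : M ∈ weightBnds β G := by
      refine ⟨hMpos.le, fun x₀ R hR => ?_⟩
      have h1 : (∫ x in closedBall x₀ R, G x) ≤ M := setIntegral_le_integral hGint hGnn
      have h2 : (1:ℝ) ≤ R ^ β := by
        calc (1:ℝ) = 1 ^ β := (Real.one_rpow β).symm
        _ ≤ R ^ β := Real.rpow_le_rpow zero_le_one hR hβ.le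
      nlinarith
    have hGW : IsWeight β G := ⟨hGmeas, hG01, ⟨M, hMM⟩⟩
    have hGne : G ≠ 0 := by
      intro h0
      rw [h0] at hlpos
      simp at hlpos
    have hlow : ENNReal.ofReal (t ^ β) * ENNReal.ofReal M
        ≤ ∫⁻ x, ENNReal.ofReal (F x ^ β * G x) := by
      rw [hMof, ← lintegral_const_mul _ hGmeas.ennreal_ofReal]
      refine lintegral_mono fun x => ?_
      rw [← ENNReal.ofReal_mul htβ.le]
      apply ENNReal.ofReal_le_ofReal
      by_cases hx : x ∈ ZB
      · have h1 : t ^ β ≤ F x ^ β := Real.rpow_le_rpow ht.le (le_of_lt hx.1.2) hβ.le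
        exact mul_le_mul_of_nonneg_right h1 (hG01 x).1
      · rw [hGdef, Set.indicator_of_notMem hx]
        simp
    have hwAle : wA β G ≤ M := csInf_le ⟨0, fun c hc => hc.1⟩ hMM
    have hcontra : ENNReal.ofReal (t ^ β) ≤ S := by
      have hMne0 : ENNReal.ofReal M ≠ 0 := (ENNReal.ofReal_pos.2 hMpos).ne'
      calc ENNReal.ofReal (t ^ β)
          = ENNReal.ofReal (t ^ β) * ENNReal.ofReal M / ENNReal.ofReal M := by
            rw [mul_div_assoc, ENNReal.div_self hMne0 ENNReal.ofReal_ne_top, mul_one]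
        _ ≤ (∫⁻ x, ENNReal.ofReal (F x ^ β * G x)) / ENNReal.ofReal (wA β G) :=
            ENNReal.div_le_div hlow (ENNReal.ofReal_le_ofReal hwAle)
        _ ≤ S := hSle G hGW hGne
    exact absurd htS (not_lt.2 hcontra)
  -- Step K2 : uniform bound on balls
  have key : ∀ R : ℝ, 1 ≤ R →
      (∫⁻ x in closedBall (0:Esp n) R, ENNReal.ofReal (m x ^ α * H x)) ≤
        ENNReal.ofReal (t ^ α) * ENNReal.ofReal A := by
    intro R hR
    set B : Set (Esp n) := closedBall (0:Esp n) R with hBdef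
    have hBmeas : MeasurableSet B := measurableSet_closedBall
    set u : Esp n → ℝ := B.indicator (fun x => m x ^ α * H x / t ^ α) with hudef
    set g : Esp n → ℝ := B.indicator (fun x => m x ^ (α - β) * H x / t ^ (α - β)) with hgdef
    have hun0 : ∀ x, 0 ≤ m x ^ α * H x / t ^ α := fun x =>
      div_nonneg (mul_nonneg (Real.rpow_nonneg (hm0 x) _) (hH01 x).1) htα.le
    have hgn0 : ∀ x, 0 ≤ m x ^ (α - β) * H x / t ^ (α - β) := fun x =>
      div_nonneg (mul_nonneg (Real.rpow_nonneg (hm0 x) _) (hH01 x).1) htab.le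
    have humeas : Measurable u :=
      (((hmmeas.pow_const α).mul hHmeas).div_const _).indicator hBmeas
    have hgmeas : Measurable g :=
      (((hmmeas.pow_const (α - β)).mul hHmeas).div_const _).indicator hBmeas
    have hu01 : ∀ x, 0 ≤ u x ∧ u x ≤ 1 := by
      intro x
      by_cases hx : x ∈ B
      · rw [hudef, Set.indicator_of_mem hx]
        refine ⟨hun0 x, ?_⟩
        rw [div_le_one htα]
        have h1 : m x ^ α ≤ t ^ α := Real.rpow_le_rpow (hm0 x) (hmt x) hα.le
        nlinarith [(hH01 x).1, (hH01 x).2, Real.rpow_nonneg (hm0 x) α]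
      · rw [hudef, Set.indicator_of_notMem hx]
        exact ⟨le_rfl, zero_le_one⟩
    have hg01 : ∀ x, 0 ≤ g x ∧ g x ≤ 1 := by
      intro x
      by_cases hx : x ∈ B
      · rw [hgdef, Set.indicator_of_mem hx]
        refine ⟨hgn0 x, ?_⟩
        rw [div_le_one htab]
        have h1 : m x ^ (α-β) ≤ t ^ (α-β) := Real.rpow_le_rpow (hm0 x) (hmt x) hab.le
        nlinarith [(hH01 x).1, (hH01 x).2, Real.rpow_nonneg (hm0 x) (α-β)]
      · rw [hgdef, Set.indicator_of_notMem hx]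
        exact ⟨le_rfl, zero_le_one⟩
    set W : ℝ≥0∞ := ∫⁻ x, ENNReal.ofReal (u x) with hWdef
    have hWle : W ≤ volume B := by
      have hptw : ∀ x, ENNReal.ofReal (u x) ≤ B.indicator (fun _ => (1:ℝ≥0∞)) x := by
        intro x
        by_cases hx : x ∈ B
        · rw [Set.indicator_of_mem hx]
          exact ENNReal.ofReal_le_one.2 (hu01 x).2
        · rw [hudef, Set.indicator_of_notMem hx, Set.indicator_of_notMem hx]
          simp
      calc W ≤ ∫⁻ x, B.indicator (fun _ => (1:ℝ≥0∞)) x := lintegral_mono hptw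
        _ = volume B := by rw [lintegral_indicator hBmeas]; simp
    have hWtop : W ≠ ∞ := (lt_of_le_of_lt hWle measure_closedBall_lt_top).ne
    set w : ℝ := W.toReal with hwdef
    have hWw : W = ENNReal.ofReal w := (ENNReal.ofReal_toReal hWtop).symm
    have hw0 : 0 ≤ w := ENNReal.toReal_nonneg
    have hmain : (∫⁻ x in closedBall (0:Esp n) R, ENNReal.ofReal (m x ^ α * H x))
        = ENNReal.ofReal (t ^ α) * W := by
      have hptw : ∀ x, B.indicator (fun y => ENNReal.ofReal (m y ^ α * H y)) x
          = ENNReal.ofReal (t ^ α) * ENNReal.ofReal (u x) := by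
        intro x
        by_cases hx : x ∈ B
        · rw [Set.indicator_of_mem hx, hudef, Set.indicator_of_mem hx,
            ← ENNReal.ofReal_mul htα.le, mul_comm (t ^ α), div_mul_cancel₀ _ htα.ne']
        · rw [Set.indicator_of_notMem hx, hudef, Set.indicator_of_notMem hx]
          simp
      calc (∫⁻ x in closedBall (0:Esp n) R, ENNReal.ofReal (m x ^ α * H x))
          = ∫⁻ x, B.indicator (fun y => ENNReal.ofReal (m y ^ α * H y)) x :=
            (lintegral_indicator hBmeas _).symm
        _ = ∫⁻ x, ENNReal.ofReal (t ^ α) * ENNReal.ofReal (u x) := lintegral_congr hptw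
        _ = ENNReal.ofReal (t ^ α) * W := lintegral_const_mul _ humeas.ennreal_ofReal
    rw [hmain]
    refine mul_le_mul_right ?_ _
    -- show W ≤ ofReal A
    rcases eq_or_ne W 0 with hW0 | hWne0
    · rw [hW0]; exact zero_le
    -- Hölder exponents
    set p : ℝ := α / (α - β) with hpdef
    set q : ℝ := α / β with hqdef
    have hp1 : 1 / p = (α - β)/α := by rw [hpdef]; exact one_div_div _ _
    have hq1 : 1 / q = β/α := by rw [hqdef]; exact one_div_div _ _
    have hppos : 0 < p := div_pos hα hab
    have hqpos : 0 < q := div_pos hα hβ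
    have hpq : p.HolderConjugate q := by
      rw [Real.holderConjugate_iff]
      refine ⟨?_, ?_⟩
      · rw [hpdef, lt_div_iff₀ hab]
        linarith
      · rw [← one_div, ← one_div, hp1, hq1, ← add_div, sub_add_cancel,
          div_self hα.ne']
    -- real pointwise identity
    have hreal : ∀ x : Esp n, (m x ^ α * H x / t ^ α) ^ ((α-β)/α) * H x ^ (β/α)
        = m x ^ (α-β) * H x / t ^ (α-β) := by
      intro x
      have ha := hm0 x
      have hh := (hH01 x).1
      have e1 : m x ^ α * H x / t ^ α = m x ^ α * (t ^ α)⁻¹ * H x := by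
        rw [div_eq_mul_inv, mul_right_comm]
      have e2 : α * ((α-β)/α) = α - β := by
        rw [mul_comm, div_mul_cancel₀ _ hα.ne']
      have e3 : (α-β)/α + β/α = 1 := by
        rw [← add_div, sub_add_cancel, div_self hα.ne']
      rw [e1, Real.mul_rpow (mul_nonneg (Real.rpow_nonneg ha _) (inv_nonneg.2 htα.le)) hh,
        Real.mul_rpow (Real.rpow_nonneg ha _) (inv_nonneg.2 htα.le),
        ← Real.rpow_mul ha, Real.inv_rpow (Real.rpow_nonneg ht.le _),
        ← Real.rpow_mul ht.le, e2, mul_assoc,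
        ← Real.rpow_add' (y := (α-β)/α) (z := β/α) hh (by rw [e3]; exact one_ne_zero),
        e3, Real.rpow_one]
      rw [div_eq_mul_inv, mul_right_comm]
    -- pointwise Hölder splitting in ℝ≥0∞
    have hptwH : ∀ x, ENNReal.ofReal (g x) ≤
        ((fun x => ENNReal.ofReal (u x) ^ (1/p)) * (fun x => ENNReal.ofReal (H x) ^ (1/q))) x := by
      intro x
      simp only [Pi.mul_apply]
      by_cases hx : x ∈ B
      · rw [hgdef, hudef, Set.indicator_of_mem hx, Set.indicator_of_mem hx, hp1, hq1,
          ENNReal.ofReal_rpow_of_nonneg (hun0 x) (div_nonneg hab.le hα.le),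
          ENNReal.ofReal_rpow_of_nonneg (hH01 x).1 (div_nonneg hβ.le hα.le),
          ← ENNReal.ofReal_mul (Real.rpow_nonneg (hun0 x) _)]
        exact le_of_eq (congrArg ENNReal.ofReal (hreal x)).symm
      · rw [hgdef, Set.indicator_of_notMem hx]
        simp
    -- the weight bound constant
    set C0 : ℝ := A ^ (1/q) * w ^ (1/p) with hC0def
    have hC0nn : 0 ≤ C0 := mul_nonneg (Real.rpow_nonneg hA0 _) (Real.rpow_nonneg hw0 _)
    have hC0mem : C0 ∈ weightBnds β g := by
      refine ⟨hC0nn, fun x₀ ρ hρ => ?_⟩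
      have hρ0 : (0:ℝ) < ρ := lt_of_lt_of_le one_pos hρ
      have hgnn : 0 ≤ᵐ[volume.restrict (closedBall x₀ ρ)] g :=
        Filter.Eventually.of_forall fun x => (hg01 x).1
      rw [integral_eq_lintegral_of_nonneg_ae hgnn hgmeas.aestronglyMeasurable]
      have hHolder : (∫⁻ x in closedBall x₀ ρ, ENNReal.ofReal (g x)) ≤
          (∫⁻ x in closedBall x₀ ρ, ENNReal.ofReal (u x)) ^ (1/p) *
          (∫⁻ x in closedBall x₀ ρ, ENNReal.ofReal (H x)) ^ (1/q) := by
        have h1 : (∫⁻ x in closedBall x₀ ρ, ENNReal.ofReal (g x)) ≤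
            ∫⁻ x in closedBall x₀ ρ,
              ((fun x => ENNReal.ofReal (u x) ^ (1/p)) *
               (fun x => ENNReal.ofReal (H x) ^ (1/q))) x := lintegral_mono hptwH
        have h2 := ENNReal.lintegral_mul_le_Lp_mul_Lq (volume.restrict (closedBall x₀ ρ)) hpq
          (humeas.ennreal_ofReal.pow_const (1/p)).aemeasurable
          (hHmeas.ennreal_ofReal.pow_const (1/q)).aemeasurable
        refine h1.trans (h2.trans_eq ?_)
        congr 1
        · congr 1
          refine lintegral_congr fun x => ?_
          rw [← ENNReal.rpow_mul, one_div, inv_mul_cancel₀ hppos.ne', ENNReal.rpow_one]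
        · congr 1
          refine lintegral_congr fun x => ?_
          rw [← ENNReal.rpow_mul, one_div, inv_mul_cancel₀ hqpos.ne', ENNReal.rpow_one]
      have h3 : (∫⁻ x in closedBall x₀ ρ, ENNReal.ofReal (u x)) ≤ ENNReal.ofReal w :=
        (setLIntegral_le_lintegral _ _).trans hWw.le
      have h4 : (∫⁻ x in closedBall x₀ ρ, ENNReal.ofReal (H x)) ≤
          ENNReal.ofReal (A * ρ ^ α) := by
        rw [← ofReal_integral_eq_lintegral_ofReal
          (integrableOn_ball hHmeas hH01 x₀ ρ subset_rfl)
          (Filter.Eventually.of_forall fun x => (hH01 x).1)]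
        exact ENNReal.ofReal_le_ofReal (hAmem.2 x₀ ρ hρ)
      have h5 : (∫⁻ x in closedBall x₀ ρ, ENNReal.ofReal (g x)) ≤
          ENNReal.ofReal (C0 * ρ ^ β) := by
        refine hHolder.trans ?_
        have h6 := mul_le_mul' (ENNReal.rpow_le_rpow h3 (one_div_nonneg.2 hppos.le))
          (ENNReal.rpow_le_rpow h4 (one_div_nonneg.2 hqpos.le))
        refine h6.trans_eq ?_
        rw [ENNReal.ofReal_rpow_of_nonneg hw0 (one_div_nonneg.2 hppos.le),
          ENNReal.ofReal_rpow_of_nonneg (mul_nonneg hA0 (Real.rpow_nonneg hρ0.le _))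
            (one_div_nonneg.2 hqpos.le),
          ← ENNReal.ofReal_mul (Real.rpow_nonneg hw0 _)]
        congr 1
        rw [Real.mul_rpow hA0 (Real.rpow_nonneg hρ0.le _), ← Real.rpow_mul hρ0.le]
        have e7 : α * (1/q) = β := by
          rw [hq1, mul_comm, div_mul_cancel₀ _ hα.ne']
        rw [e7, hC0def]
        ring
      exact ENNReal.toReal_le_of_le_ofReal
        (mul_nonneg hC0nn (Real.rpow_nonneg hρ0.le _)) h5
    have hgne : g ≠ 0 := by
      intro h0
      apply hWne0
      have hzero : ∀ x, u x = 0 := by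
        intro x
        by_cases hx : x ∈ B
        · have hg0 : m x ^ (α-β) * H x / t ^ (α-β) = 0 := by
            have hgx := congrFun h0 x
            rwa [hgdef, Set.indicator_of_mem hx] at hgx
          rw [div_eq_zero_iff] at hg0
          rcases hg0 with hg0 | hg0
          · rcases mul_eq_zero.1 hg0 with h1 | h1
            · have hm0x : m x = 0 := (Real.rpow_eq_zero (hm0 x) hab.ne').1 h1
              rw [hudef, Set.indicator_of_mem hx, hm0x,
                Real.zero_rpow hα.ne', zero_mul, zero_div]
            · rw [hudef, Set.indicator_of_mem hx, h1, mul_zero, zero_div]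
          · exact absurd hg0 htab.ne'
        · rw [hudef, Set.indicator_of_notMem hx]
      rw [hWdef]
      have hz2 : ∀ x, ENNReal.ofReal (u x) = 0 := fun x => by rw [hzero x]; simp
      simp [hz2]
    have hgW : IsWeight β g := ⟨hgmeas, hg01, ⟨C0, hC0mem⟩⟩
    -- lower bound for the numerator
    have hlow : ENNReal.ofReal (t ^ β) * W ≤ ∫⁻ x, ENNReal.ofReal (F x ^ β * g x) := by
      rw [hWdef, ← lintegral_const_mul _ humeas.ennreal_ofReal]
      refine lintegral_mono fun x => ?_
      rw [← ENNReal.ofReal_mul htβ.le]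
      apply ENNReal.ofReal_le_ofReal
      by_cases hx : x ∈ B
      · rw [hgdef, hudef, Set.indicator_of_mem hx, Set.indicator_of_mem hx]
        have eβ : β + (α - β) = α := by ring
        have hne : β + (α - β) ≠ 0 := by rw [eβ]; exact hα.ne'
        have e4 : m x ^ β * (m x ^ (α-β) * H x / t ^ (α-β))
            = m x ^ α * H x / t ^ (α - β) := by
          rw [← mul_div_assoc, ← mul_assoc,
            ← Real.rpow_add' (y := β) (z := α - β) (hm0 x) hne, eβ]
        have e3 : t ^ (α - β) = t ^ α / t ^ β := Real.rpow_sub ht α β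
        have e5 : t ^ β * (m x ^ α * H x / t ^ α) = m x ^ α * H x / t ^ (α - β) := by
          rw [e3, div_div_eq_mul_div, ← mul_div_assoc]
          ring
        rw [e5, ← e4]
        exact mul_le_mul_of_nonneg_right (Real.rpow_le_rpow (hm0 x) (hmF x) hβ.le) (hgn0 x)
      · rw [hgdef, hudef, Set.indicator_of_notMem hx, Set.indicator_of_notMem hx]
        simp
    have hub : ENNReal.ofReal (t ^ β) * W ≤ ENNReal.ofReal (t ^ β) * ENNReal.ofReal C0 := by
      refine hlow.trans ?_
      have h5 : (∫⁻ x, ENNReal.ofReal (F x ^ β * g x)) ≤ S * ENNReal.ofReal (wA β g) :=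
        div_le_extract ENNReal.ofReal_ne_top hS (hSle g hgW hgne)
      refine h5.trans ?_
      exact mul_le_mul' htS.le (ENNReal.ofReal_le_ofReal (csInf_le ⟨0, fun c hc => hc.1⟩ hC0mem))
    have hWC : W ≤ ENNReal.ofReal C0 :=
      (ENNReal.mul_le_mul_iff_right (ENNReal.ofReal_pos.2 htβ).ne' ENNReal.ofReal_ne_top).1 hub
    have hwC : w ≤ C0 := by
      rw [hWw] at hWC
      exact (ENNReal.ofReal_le_ofReal_iff hC0nn).1 hWC
    have hwpos : 0 < w := ENNReal.toReal_pos hWne0 hWtop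
    have hwA : w ≤ A := by
      refine le_of_le_rpow hwpos hA0 (one_div_pos.2 hqpos) ?_ ?_
      · rw [hq1, div_lt_one hα]
        linarith
      · have e8 : 1 - 1/q = 1/p := by
          rw [hp1, hq1, eq_div_iff hα.ne', sub_mul, one_mul, div_mul_cancel₀ _ hα.ne']
        rw [e8]
        rw [hC0def] at hwC
        exact hwC
    rw [hWw]
    exact ENNReal.ofReal_le_ofReal hwA
  -- Monotone union over balls
  have hUnion : (∫⁻ x, ENNReal.ofReal (m x ^ α * H x)) ≤
      ENNReal.ofReal (t ^ α) * ENNReal.ofReal A := by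
    set f : ℕ → Esp n → ℝ≥0∞ := fun k =>
      (closedBall (0:Esp n) (k+1)).indicator (fun x => ENNReal.ofReal (m x ^ α * H x)) with hfdef
    have hfmeas : ∀ k, Measurable (f k) :=
      fun k => (((hmmeas.pow_const α).mul hHmeas).ennreal_ofReal).indicator
        measurableSet_closedBall
    have hfmono : Monotone f := by
      intro k l hkl x
      refine Set.indicator_le_indicator_of_subset (closedBall_subset_closedBall ?_)
        (fun y => zero_le) x
      have hkl' : (k:ℝ) ≤ l := Nat.cast_le.2 hkl
      linarith
    have hsup : ∀ x, ⨆ k, f k x = ENNReal.ofReal (m x ^ α * H x) := by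
      intro x
      obtain ⟨k, hk⟩ := exists_nat_ge ‖x‖
      apply le_antisymm
      · refine iSup_le fun j => ?_
        simp only [hfdef]
        exact Set.indicator_le_self' (fun y _ => zero_le) x
      · refine le_trans ?_ (le_iSup _ k)
        simp only [hfdef]
        rw [Set.indicator_of_mem (Metric.mem_closedBall.2 (by rw [dist_zero_right]; linarith))]
    calc (∫⁻ x, ENNReal.ofReal (m x ^ α * H x)) = ∫⁻ x, ⨆ k, f k x :=
          lintegral_congr fun x => (hsup x).symm
      _ = ⨆ k, ∫⁻ x, f k x := lintegral_iSup hfmeas hfmono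
      _ ≤ ENNReal.ofReal (t ^ α) * ENNReal.ofReal A := by
          refine iSup_le fun k => ?_
          simp only [hfdef]
          rw [lintegral_indicator measurableSet_closedBall]
          exact key ((k:ℝ)+1) (by have : (0:ℝ) ≤ (k:ℝ) := Nat.cast_nonneg k; linarith)
  -- a.e. comparison and conclusion
  have hae : (∫⁻ x, ENNReal.ofReal (F x ^ α * H x)) ≤ ∫⁻ x, ENNReal.ofReal (m x ^ α * H x) := by
    refine lintegral_mono_ae ?_
    filter_upwards [hK1] with x hx
    rcases hx with h0 | hle
    · simp [h0]
    · have hmx : m x = F x := min_eq_left hle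
      rw [hmx]
  calc (∫⁻ x, ENNReal.ofReal (F x ^ α * H x))
      ≤ ENNReal.ofReal (t ^ α) * ENNReal.ofReal A := hae.trans hUnion
    _ = ENNReal.ofReal (wA α H) * ENNReal.ofReal (t ^ α) := by rw [mul_comm]

end StmtAux

/-- Theorem 1.2 (weighted Hölder-type inequality): if `0 < β < α ≤ n` then
`M_α F ≤ M_β F` for every nonnegative Lebesgue measurable `F` on `ℝⁿ`. -/
theorem stmt0 (n : ℕ) (hn : 1 ≤ n) (α β : ℝ) (hβ : 0 < β) (hβα : β < α) (hα : α ≤ n)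
    (F : Esp n → ℝ) (hFm : Measurable F) (hF0 : ∀ x, 0 ≤ F x) :
    fracM n α F ≤ fracM n β F := by
  have hα0 : 0 < α := hβ.trans hβα
  unfold fracM
  set S : ℝ≥0∞ := ⨆ (H : Esp n → ℝ) (_ : IsWeight β H ∧ H ≠ 0),
      (∫⁻ x, ENNReal.ofReal (F x ^ β * H x)) / ENNReal.ofReal (wA β H) with hSdef
  rcases eq_or_ne S ⊤ with hTop | hS
  · rw [hTop, ENNReal.top_rpow_of_pos (one_div_pos.2 hβ)]
    exact le_top
  have hSle : ∀ G : Esp n → ℝ, IsWeight β G → G ≠ 0 →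
      (∫⁻ x, ENNReal.ofReal (F x ^ β * G x)) / ENNReal.ofReal (wA β G) ≤ S := by
    intro G hG hGne
    rw [hSdef]
    exact le_iSup₂_of_le G ⟨hG, hGne⟩ le_rfl
  have hmain : (⨆ (H : Esp n → ℝ) (_ : IsWeight α H ∧ H ≠ 0),
      (∫⁻ x, ENNReal.ofReal (F x ^ α * H x)) / ENNReal.ofReal (wA α H)) ≤ S ^ (α/β) := by
    refine iSup₂_le fun H hH => ?_
    obtain ⟨hW, -⟩ := hH
    set c₀ : ℝ := (S ^ (1/β)).toReal with hc0def
    have hc00 : 0 ≤ c₀ := ENNReal.toReal_nonneg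
    have hSfin : S ^ (1/β) ≠ ⊤ := ENNReal.rpow_ne_top_of_nonneg (one_div_pos.2 hβ).le hS
    have hSc : ENNReal.ofReal c₀ = S ^ (1/β) := ENNReal.ofReal_toReal hSfin
    have hSeq : S = ENNReal.ofReal (c₀ ^ β) := by
      rw [← ENNReal.ofReal_rpow_of_nonneg hc00 hβ.le, hSc, ← ENNReal.rpow_mul,
        one_div, inv_mul_cancel₀ hβ.ne', ENNReal.rpow_one]
    have hkey : ∀ v : ℝ, c₀ < v → (∫⁻ x, ENNReal.ofReal (F x ^ α * H x)) ≤
        ENNReal.ofReal (wA α H) * ENNReal.ofReal (v ^ α) := by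
      intro v hv
      have hv0 : 0 < v := lt_of_le_of_lt hc00 hv
      refine StmtAux.core hβ hβα hFm hF0 hW hS hSle hv0 ?_
      rw [hSeq]
      exact (ENNReal.ofReal_lt_ofReal_iff (Real.rpow_pos_of_pos hv0 β)).2
        (Real.rpow_lt_rpow hc00 hv hβ)
    have hseq : Filter.Tendsto (fun k : ℕ => c₀ + 1/(k+1)) Filter.atTop (nhds c₀) := by
      have h1 : Filter.Tendsto (fun k : ℕ => 1 / ((k:ℝ) + 1)) Filter.atTop (nhds 0) :=
        tendsto_one_div_add_atTop_nhds_zero_nat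
      have h2 := Filter.Tendsto.add (tendsto_const_nhds (x := c₀) (f := Filter.atTop)) h1
      simpa using h2
    have hcont : ContinuousAt (fun v : ℝ => ENNReal.ofReal (v ^ α)) c₀ :=
      (ENNReal.continuous_ofReal.continuousAt).comp
        (Real.continuousAt_rpow_const _ _ (Or.inr hα0.le))
    have hlim0 : Filter.Tendsto (fun k : ℕ => ENNReal.ofReal ((c₀ + 1/(k+1)) ^ α))
        Filter.atTop (nhds (ENNReal.ofReal (c₀ ^ α))) := hcont.tendsto.comp hseq
    have hlim : Filter.Tendsto (fun k : ℕ =>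
        ENNReal.ofReal (wA α H) * ENNReal.ofReal ((c₀ + 1/(k+1)) ^ α)) Filter.atTop
        (nhds (ENNReal.ofReal (wA α H) * ENNReal.ofReal (c₀ ^ α))) :=
      ENNReal.Tendsto.const_mul hlim0 (Or.inr ENNReal.ofReal_ne_top)
    have hI : (∫⁻ x, ENNReal.ofReal (F x ^ α * H x)) ≤
        ENNReal.ofReal (wA α H) * ENNReal.ofReal (c₀ ^ α) := by
      refine ge_of_tendsto hlim ?_
      refine Filter.Eventually.of_forall fun k => hkey _ ?_
      have hpos : (0:ℝ) < 1/((k:ℝ)+1) := by positivity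
      linarith
    have hc : ENNReal.ofReal (c₀ ^ α) = S ^ (α/β) := by
      rw [← ENNReal.ofReal_rpow_of_nonneg hc00 hα0.le, hSc, ← ENNReal.rpow_mul]
      congr 1
      ring
    rw [hc] at hI
    have hfin : S ^ (α/β) ≠ ⊤ := ENNReal.rpow_ne_top_of_nonneg (div_pos hα0 hβ).le hS
    rw [ENNReal.div_le_iff_le_mul (Or.inr hfin) (Or.inl ENNReal.ofReal_ne_top)]
    rw [mul_comm] at hI
    exact hI
  calc (⨆ (H : Esp n → ℝ) (_ : IsWeight α H ∧ H ≠ 0),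
      (∫⁻ x, ENNReal.ofReal (F x ^ α * H x)) / ENNReal.ofReal (wA α H)) ^ (1/α)
      ≤ (S ^ (α/β)) ^ (1/α) := ENNReal.rpow_le_rpow hmain (one_div_pos.2 hα0).le
    _ = S ^ (1/β) := by
        rw [← ENNReal.rpow_mul]
        congr 1
        rw [div_mul_div_comm, mul_one, mul_comm β α, ← div_div, div_self hα0.ne']
end
end

section
/- Let n ≥ 2 be an integer and 0 < α < n. Then for every pair (β,b) of real numbers with β > α/2 and b > 0 there exist a number R ≥ 1 and a finite positive Borel measure μ on ℝⁿ supported in the closed unit ball B(0,1) with 0 < I_α(μ) < ∞ such that R^β ‖μ̂(R·)‖_{L¹(σ)} > b · √(I_α(μ)). -/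
open MeasureTheory Metric Real
open scoped ENNReal

noncomputable section

/-- The Fourier transform of a measure on `ℝⁿ`. -/
def measFT {n : ℕ} (μ : Measure (Esp n)) (ξ : Esp n) : ℂ :=
  ∫ y, Complex.exp (((-2 * π * (inner ℝ ξ y : ℝ) : ℝ) : ℂ) * Complex.I) ∂μ

/-- `𝒞_α(μ) = sup_{x, r>0} μ(B(x,r))/r^α`, valued in `ℝ≥0∞`. -/
def Cdim {n : ℕ} (α : ℝ) (μ : Measure (Esp n)) : ℝ≥0∞ :=
  ⨆ (x : Esp n) (r : ℝ) (_ : 0 < r), μ (closedBall x r) / ENNReal.ofReal (r ^ α)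

/-- The `α`-dimensional energy `I_α(μ)`, valued in `ℝ≥0∞`. -/
def energy {n : ℕ} (α : ℝ) (μ : Measure (Esp n)) : ℝ≥0∞ :=
  ∫⁻ x, ∫⁻ y, (ENNReal.ofReal ‖x - y‖) ^ (-α) ∂μ ∂μ



def projE (m : ℕ) : Esp (m+1) → Esp m := fun x => WithLp.toLp 2 (fun i => x i.castSucc)

lemma proj_lipschitz (m : ℕ) : LipschitzWith 1 (projE m) := by
  apply LipschitzWith.of_dist_le_mul
  intro x y
  simp only [NNReal.coe_one, one_mul]
  rw [EuclideanSpace.dist_eq x y, EuclideanSpace.dist_eq (projE m x) (projE m y)]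
  apply Real.sqrt_le_sqrt
  rw [Fin.sum_univ_castSucc (f := fun i : Fin (m+1) => dist (x i) (y i) ^ 2)]
  exact le_add_of_nonneg_right (sq_nonneg _)

lemma ball_subset_proj_image (m : ℕ) :
    closedBall (0 : Esp m) 1 ⊆
      (projE m) '' (sphere (0 : Esp (m+1)) 1) := by
  intro v hv
  rw [mem_closedBall, dist_zero_right] at hv
  have h1 : 0 ≤ 1 - ‖v‖^2 := by nlinarith [norm_nonneg v]
  refine ⟨(WithLp.toLp 2 (Fin.snoc (α := fun _ => ℝ) (fun i => v i) (Real.sqrt (1 - ‖v‖^2))) : Esp (m+1)), ?_, ?_⟩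
  · rw [mem_sphere_zero_iff_norm, EuclideanSpace.norm_eq]
    rw [Fin.sum_univ_castSucc (f := fun i : Fin (m+1) => ‖(WithLp.toLp 2 (Fin.snoc (α := fun _ => ℝ) (fun i => v i) (Real.sqrt (1 - ‖v‖^2))) : Esp (m+1)) i‖ ^ 2)]
    have hs : ∑ i : Fin m, ‖(WithLp.toLp 2 (Fin.snoc (α := fun _ => ℝ) (fun i => v i) (Real.sqrt (1 - ‖v‖^2))) : Esp (m+1)) i.castSucc‖ ^ 2
        = ‖v‖ ^ 2 := by
      rw [EuclideanSpace.norm_eq, Real.sq_sqrt (by positivity)]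
      congr 1; funext i; rw [WithLp.ofLp_toLp, Fin.snoc_castSucc]
    rw [hs]
    have hl : ‖(WithLp.toLp 2 (Fin.snoc (α := fun _ => ℝ) (fun i => v i) (Real.sqrt (1 - ‖v‖^2))) : Esp (m+1)) (Fin.last m)‖ ^ 2
        = 1 - ‖v‖ ^ 2 := by
      rw [WithLp.ofLp_toLp, Fin.snoc_last, Real.norm_eq_abs, sq_abs, Real.sq_sqrt h1]
    rw [hl]
    norm_num
  · ext i
    show (WithLp.toLp 2 (Fin.snoc (α := fun _ => ℝ) (fun i => v i) (Real.sqrt (1 - ‖v‖^2))) : Esp (m+1)) i.castSucc = v i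
    rw [WithLp.ofLp_toLp, Fin.snoc_castSucc]

lemma hausdorff_closedBall_pos (m : ℕ) (hm : 1 ≤ m) :
    0 < μH[(m:ℝ)] (closedBall (0 : Esp m) 1) := by
  have hmpos : (0:ℝ) < m := by exact_mod_cast hm
  have key := (PiLp.lipschitzWith_ofLp 2 (fun _ : Fin m => ℝ)).hausdorffMeasure_image_le
    (d := (m:ℝ)) (by positivity) (closedBall (0 : Esp m) 1)
  simp only [ENNReal.coe_one, ENNReal.one_rpow, one_mul] at key
  refine lt_of_lt_of_le ?_ key
  have hpi : (μH[(m:ℝ)] : Measure (Fin m → ℝ)) = volume := by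
    have := hausdorffMeasure_pi_real (ι := Fin m)
    rwa [Fintype.card_fin] at this
  rw [hpi]
  have hsub : ball (0 : Fin m → ℝ) ((m:ℝ)⁻¹)
      ⊆ (WithLp.equiv 2 (Fin m → ℝ)) '' (closedBall (0 : Esp m) 1) := by
    intro y hy
    refine ⟨(WithLp.equiv 2 (Fin m → ℝ)).symm y, ?_, by simp⟩
    rw [mem_closedBall, dist_zero_right, EuclideanSpace.norm_eq]
    have hbd : ∀ i, ‖((WithLp.equiv 2 (Fin m → ℝ)).symm y) i‖ ^ 2 ≤ (m:ℝ)⁻¹ ^ 2 := by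
      intro i
      have : |y i| < (m:ℝ)⁻¹ := by
        have := mem_ball_iff_norm.1 hy
        have h2 := norm_le_pi_norm y i
        calc |y i| = ‖y i‖ := (Real.norm_eq_abs _).symm
        _ ≤ ‖y‖ := h2
        _ < (m:ℝ)⁻¹ := by simpa [sub_zero] using this
      have he : ((WithLp.equiv 2 (Fin m → ℝ)).symm y) i = y i := rfl
      rw [he, Real.norm_eq_abs]
      have h0 : (0:ℝ) ≤ |y i| := abs_nonneg _
      nlinarith
    have hsum : ∑ i : Fin m, ‖((WithLp.equiv 2 (Fin m → ℝ)).symm y) i‖ ^ 2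
        ≤ (m:ℝ) * (m:ℝ)⁻¹ ^ 2 := by
      calc ∑ i : Fin m, ‖((WithLp.equiv 2 (Fin m → ℝ)).symm y) i‖ ^ 2
          ≤ ∑ _i : Fin m, (m:ℝ)⁻¹ ^ 2 := Finset.sum_le_sum fun i _ => hbd i
        _ = (m:ℝ) * (m:ℝ)⁻¹ ^ 2 := by simp [Finset.sum_const]
    have hle1 : ∑ i : Fin m, ‖((WithLp.equiv 2 (Fin m → ℝ)).symm y) i‖ ^ 2 ≤ 1 := by
      refine hsum.trans ?_
      have h1 : (m:ℝ) * (m:ℝ)⁻¹ ^ 2 = (m:ℝ)⁻¹ := by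
        field_simp
      rw [h1]
      have : (1:ℝ) ≤ (m:ℝ) := by exact_mod_cast hm
      calc (m:ℝ)⁻¹ ≤ 1⁻¹ := by
            apply inv_anti₀ one_pos this
        _ = 1 := inv_one
    calc Real.sqrt (∑ i : Fin m, ‖((WithLp.equiv 2 (Fin m → ℝ)).symm y) i‖ ^ 2)
        ≤ Real.sqrt 1 := Real.sqrt_le_sqrt hle1
      _ = 1 := Real.sqrt_one
  calc (0:ℝ≥0∞) < volume (ball (0 : Fin m → ℝ) ((m:ℝ)⁻¹)) :=
        measure_ball_pos volume 0 (by positivity)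
    _ ≤ volume ((WithLp.equiv 2 (Fin m → ℝ)) '' (closedBall (0 : Esp m) 1)) :=
        measure_mono hsub

lemma sphσ_univ_pos (n : ℕ) (hn : 2 ≤ n) : 0 < sphσ n Set.univ := by
  rw [sphσ, Measure.restrict_apply_univ]
  obtain ⟨m, rfl⟩ : ∃ m, n = m + 1 := ⟨n - 1, by omega⟩
  have hm : 1 ≤ m := by omega
  have hexp : ((m+1 : ℕ) : ℝ) - 1 = (m : ℝ) := by push_cast; ring
  rw [hexp]
  have h1 := hausdorff_closedBall_pos m hm
  have h2 := measure_mono (μ := μH[(m:ℝ)]) (ball_subset_proj_image m)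
  have h3 := (proj_lipschitz m).hausdorffMeasure_image_le (d := (m:ℝ))
    (by positivity) (sphere (0 : Esp (m+1)) 1)
  simp only [ENNReal.coe_one, ENNReal.one_rpow, one_mul] at h3
  exact lt_of_lt_of_le h1 (h2.trans h3)

lemma meas_g (n : ℕ) (α : ℝ) : Measurable (fun z : Esp n => (ENNReal.ofReal ‖z‖) ^ (-α)) :=
  (ENNReal.continuous_rpow_const.measurable).comp measurable_norm.ennreal_ofReal

lemma g_anti {α : ℝ} (hα : 0 < α) {a b : ℝ} (ha : 0 < a) (hab : a ≤ b) :
    (ENNReal.ofReal b) ^ (-α) ≤ (ENNReal.ofReal a) ^ (-α) := by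
  rw [ENNReal.rpow_neg, ENNReal.rpow_neg]
  exact ENNReal.inv_le_inv.2 (ENNReal.rpow_le_rpow (ENNReal.ofReal_le_ofReal hab) hα.le)

lemma K_lt_top (n : ℕ) (hn : 1 ≤ n) (α : ℝ) (hα0 : 0 < α) (hαn : α < n) :
    ∫⁻ z in closedBall (0 : Esp n) 2, (ENNReal.ofReal ‖z‖) ^ (-α) ∂volume < ⊤ := by
  set g : Esp n → ℝ≥0∞ := fun z => (ENNReal.ofReal ‖z‖) ^ (-α) with hg
  set A : ℕ → Set (Esp n) := fun j =>
    closedBall (0 : Esp n) (2*(2⁻¹:ℝ)^j) \ closedBall (0 : Esp n) ((2⁻¹:ℝ)^j) with hA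
  have hsub : closedBall (0 : Esp n) 2 ⊆ {0} ∪ ⋃ j, A j := by
    intro z hz
    rcases eq_or_ne z 0 with rfl | hz0
    · exact Or.inl rfl
    right
    have hzpos : 0 < ‖z‖ := norm_pos_iff.2 hz0
    have hex : ∃ j : ℕ, (2⁻¹:ℝ)^j < ‖z‖ := exists_pow_lt_of_lt_one hzpos (by norm_num)
    set j := Nat.find hex with hj
    have hspec : (2⁻¹:ℝ)^j < ‖z‖ := Nat.find_spec hex
    refine Set.mem_iUnion.2 ⟨j, ?_, ?_⟩
    · rw [mem_closedBall, dist_zero_right]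
      rcases Nat.eq_zero_or_pos j with h0 | hpos
      · rw [h0]; simpa using (mem_closedBall_zero_iff.1 hz)
      · have hmin := Nat.find_min hex (Nat.sub_lt hpos one_pos)
        push_neg at hmin
        have hj1 : j - 1 + 1 = j := Nat.succ_pred_eq_of_pos hpos
        have h2 : (2⁻¹:ℝ)^j = (2⁻¹:ℝ)^(j-1) * 2⁻¹ := by
          conv_lhs => rw [← hj1, pow_succ]
        calc ‖z‖ ≤ (2⁻¹:ℝ)^(j-1) := hmin
          _ = 2*(2⁻¹:ℝ)^j := by rw [h2]; ring
    · rw [mem_closedBall, dist_zero_right]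
      push_neg
      exact hspec
  have hmono := lintegral_mono_set (μ := volume) (f := g) hsub
  refine lt_of_le_of_lt hmono ?_
  refine lt_of_le_of_lt (lintegral_union_le _ _ _) ?_
  have h0 : ∫⁻ z in ({0} : Set (Esp n)), g z ∂volume = 0 := by
    apply setLIntegral_measure_zero
    have := Measure.addHaar_closedBall (volume : Measure (Esp n)) 0 (le_refl (0:ℝ))
    rw [closedBall_zero, finrank_euclideanSpace_fin, zero_pow (by omega), ENNReal.ofReal_zero,
      zero_mul] at this
    exact this
  rw [h0, zero_add]
  refine lt_of_le_of_lt (lintegral_iUnion_le _ _) ?_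
  -- bound each term
  set V := volume (ball (0 : Esp n) 1) with hV
  have hVlt : V < ⊤ := measure_ball_lt_top
  set q : ℝ≥0∞ := ENNReal.ofReal ((2:ℝ)^α * (2⁻¹:ℝ)^n) with hq
  set C : ℝ≥0∞ := ENNReal.ofReal ((2:ℝ)^(n:ℕ)) * V with hC
  have hterm : ∀ j : ℕ, ∫⁻ z in A j, g z ∂volume ≤ q^j * C := by
    intro j
    have hpow : (0:ℝ) < (2⁻¹:ℝ)^j := by positivity
    have hbd : ∀ z ∈ A j, g z ≤ (ENNReal.ofReal ((2⁻¹:ℝ)^j)) ^ (-α) := by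
      intro z hz
      have hz2 : ¬ z ∈ closedBall (0 : Esp n) ((2⁻¹:ℝ)^j) := hz.2
      rw [mem_closedBall, dist_zero_right, not_le] at hz2
      exact g_anti hα0 hpow hz2.le
    calc ∫⁻ z in A j, g z ∂volume
        ≤ ∫⁻ _z in A j, (ENNReal.ofReal ((2⁻¹:ℝ)^j)) ^ (-α) ∂volume := by
          apply setLIntegral_mono (by exact measurable_const) hbd
      _ = (ENNReal.ofReal ((2⁻¹:ℝ)^j)) ^ (-α) * volume (A j) := by
          rw [setLIntegral_const]
      _ ≤ (ENNReal.ofReal ((2⁻¹:ℝ)^j)) ^ (-α) *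
            (ENNReal.ofReal ((2*(2⁻¹:ℝ)^j) ^ (n:ℕ)) * V) := by
          apply mul_le_mul_right
          have := Measure.addHaar_closedBall (volume : Measure (Esp n)) 0
            (r := 2*(2⁻¹:ℝ)^j) (by positivity)
          rw [finrank_euclideanSpace_fin] at this
          calc volume (A j) ≤ volume (closedBall (0 : Esp n) (2*(2⁻¹:ℝ)^j)) :=
                measure_mono Set.diff_subset
            _ = ENNReal.ofReal ((2*(2⁻¹:ℝ)^j) ^ (n:ℕ)) * V := this
      _ = q^j * C := by
          rw [ENNReal.ofReal_rpow_of_pos hpow]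
          have e1 : ((2⁻¹:ℝ)^j) ^ (-α) = ((2:ℝ)^α)^j := by
            rw [← Real.rpow_natCast (2⁻¹:ℝ) j, ← Real.rpow_mul (by norm_num),
              ← Real.rpow_natCast ((2:ℝ)^α) j, ← Real.rpow_mul (by norm_num)]
            rw [show (2⁻¹:ℝ) = (2:ℝ)^(-1:ℝ) by
              rw [Real.rpow_neg_one]]
            rw [← Real.rpow_mul (by norm_num)]
            ring_nf
          have e2 : ((2:ℝ)*(2⁻¹:ℝ)^j) ^ (n:ℕ) = (2:ℝ)^(n:ℕ) * (((2⁻¹:ℝ)^(n:ℕ))^j) := by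
            rw [mul_pow, ← pow_mul, ← pow_mul, Nat.mul_comm]
          have hq' : q = ENNReal.ofReal ((2:ℝ)^α) * ENNReal.ofReal ((2⁻¹:ℝ)^(n:ℕ)) := by
            rw [hq, ENNReal.ofReal_mul (by positivity)]
          rw [e1, e2]
          rw [ENNReal.ofReal_pow (by positivity : (0:ℝ) ≤ (2:ℝ)^α),
            ENNReal.ofReal_mul (by positivity),
            ENNReal.ofReal_pow (by positivity : (0:ℝ) ≤ (2⁻¹:ℝ)^(n:ℕ)),
            hq', hC, mul_pow]
          ring
  refine lt_of_le_of_lt (ENNReal.tsum_le_tsum hterm) ?_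
  rw [ENNReal.tsum_mul_right, ENNReal.tsum_geometric]
  have hq1 : q < 1 := by
    rw [hq, ← ENNReal.ofReal_one]
    apply ENNReal.ofReal_lt_ofReal_iff_of_nonneg (by positivity) |>.2
    have h2n : (2⁻¹:ℝ)^n = ((2:ℝ)^(n:ℕ))⁻¹ := by
      rw [inv_pow]
    rw [h2n]
    rw [mul_inv_lt_iff₀ (by positivity), one_mul]
    calc (2:ℝ)^α < (2:ℝ)^(n:ℝ) := by
          apply Real.rpow_lt_rpow_of_exponent_lt (by norm_num) hαn
      _ = (2:ℝ)^(n:ℕ) := by rw [Real.rpow_natCast]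
  have hinv : (1 - q)⁻¹ < ⊤ := by
    rw [ENNReal.inv_lt_top]
    exact tsub_pos_of_lt hq1
  exact ENNReal.mul_lt_top hinv (ENNReal.mul_lt_top ENNReal.ofReal_lt_top hVlt)

lemma energy_mu0_lt_top (n : ℕ) (hn : 1 ≤ n) (α : ℝ) (hα0 : 0 < α) (hαn : α < n) :
    energy α ((volume : Measure (Esp n)).restrict (closedBall 0 1)) < ⊤ := by
  set g : Esp n → ℝ≥0∞ := fun z => (ENNReal.ofReal ‖z‖) ^ (-α) with hgdef
  set B := closedBall (0 : Esp n) 1 with hB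
  set K := ∫⁻ z in closedBall (0 : Esp n) 2, g z ∂volume with hK
  have hKlt : K < ⊤ := K_lt_top n hn α hα0 hαn
  set F : Esp n → ℝ≥0∞ := (closedBall (0 : Esp n) 2).indicator g with hF
  have hFmeas : Measurable F := (meas_g n α).indicator measurableSet_closedBall
  have hinner : ∀ x ∈ B, ∫⁻ y in B, g (x - y) ∂volume ≤ K := by
    intro x hx
    have hxB : ‖x‖ ≤ 1 := mem_closedBall_zero_iff.1 hx
    have hpt : ∀ y ∈ B, g (x - y) ≤ F (x - y) := by
      intro y hy
      have hyB : ‖y‖ ≤ 1 := mem_closedBall_zero_iff.1 hy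
      have : x - y ∈ closedBall (0 : Esp n) 2 := by
        rw [mem_closedBall_zero_iff]
        calc ‖x - y‖ ≤ ‖x‖ + ‖y‖ := norm_sub_le _ _
          _ ≤ 2 := by linarith
      rw [hF, Set.indicator_of_mem this]
    calc ∫⁻ y in B, g (x - y) ∂volume ≤ ∫⁻ y in B, F (x - y) ∂volume :=
          setLIntegral_mono (hFmeas.comp (measurable_const.sub measurable_id)) hpt
      _ ≤ ∫⁻ y, F (x - y) ∂volume := setLIntegral_le_lintegral _ _
      _ = ∫⁻ z, F z ∂volume :=
          (Measure.measurePreserving_sub_left volume x).lintegral_comp hFmeas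
      _ = K := by rw [hK, hF, lintegral_indicator measurableSet_closedBall]
  rw [energy]
  calc ∫⁻ x, ∫⁻ y, (ENNReal.ofReal ‖x - y‖) ^ (-α) ∂(volume.restrict B) ∂(volume.restrict B)
      ≤ ∫⁻ _x, K ∂(volume.restrict B) := by
        apply lintegral_mono_ae
        filter_upwards [ae_restrict_mem (measurableSet_closedBall)] with x hx
        exact hinner x hx
    _ = K * volume B := by rw [lintegral_const, Measure.restrict_apply_univ]
    _ < ⊤ := ENNReal.mul_lt_top hKlt measure_closedBall_lt_top

lemma energy_mu0_pos (n : ℕ) (α : ℝ) (hα0 : 0 < α) :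
    0 < energy α ((volume : Measure (Esp n)).restrict (closedBall 0 1)) := by
  set B := closedBall (0 : Esp n) 1 with hB
  set c : ℝ≥0∞ := (ENNReal.ofReal 2) ^ (-α) with hc
  have hcpos : 0 < c := by
    rw [hc]
    apply ENNReal.rpow_pos (by norm_num) ENNReal.ofReal_ne_top
  have hbd : ∀ x ∈ B, ∀ y ∈ B, c ≤ (ENNReal.ofReal ‖x - y‖) ^ (-α) := by
    intro x hx y hy
    rcases eq_or_ne x y with rfl | hxy
    · simp only [sub_self, norm_zero, ENNReal.ofReal_zero]
      rw [ENNReal.zero_rpow_of_neg (by linarith)]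
      exact le_top
    have hpos : 0 < ‖x - y‖ := by
      rw [norm_pos_iff, sub_ne_zero]; exact hxy
    have hle : ‖x - y‖ ≤ 2 := by
      have hx1 := mem_closedBall_zero_iff.1 hx
      have hy1 := mem_closedBall_zero_iff.1 hy
      calc ‖x - y‖ ≤ ‖x‖ + ‖y‖ := norm_sub_le _ _
        _ ≤ 2 := by linarith
    exact g_anti hα0 hpos hle
  have hVpos : 0 < volume B := by
    refine lt_of_lt_of_le (measure_ball_pos volume 0 one_pos) (measure_mono ball_subset_closedBall)
  have hlb : c * volume B * volume B ≤ energy α (volume.restrict B) := by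
    rw [energy]
    calc c * volume B * volume B = ∫⁻ _x, c * volume B ∂(volume.restrict B) := by
          rw [lintegral_const, Measure.restrict_apply_univ]
      _ ≤ ∫⁻ x, ∫⁻ y, (ENNReal.ofReal ‖x - y‖) ^ (-α) ∂(volume.restrict B) ∂(volume.restrict B) := by
          apply lintegral_mono_ae
          filter_upwards [ae_restrict_mem measurableSet_closedBall] with x hx
          calc c * volume B = ∫⁻ _y, c ∂(volume.restrict B) := by
                rw [lintegral_const, Measure.restrict_apply_univ]
            _ ≤ _ := by
                apply lintegral_mono_ae
                filter_upwards [ae_restrict_mem measurableSet_closedBall] with y hy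
                exact hbd x hx y hy
  have hpos : 0 < c * volume B * volume B :=
    ENNReal.mul_pos (ENNReal.mul_pos hcpos.ne' hVpos.ne').ne' hVpos.ne'
  exact hpos.trans_le hlb

lemma energy_map_smul (n : ℕ) (α : ℝ) {δ : ℝ} (hδ : 0 < δ) (μ : Measure (Esp n)) [SFinite μ] :
    energy α (Measure.map (fun x : Esp n => δ • x) μ)
      = (ENNReal.ofReal δ) ^ (-α) * energy α μ := by
  have hT : Measurable (fun x : Esp n => δ • x) := (continuous_const_smul δ).measurable
  have hφ : Measurable (fun p : Esp n × Esp n => (ENNReal.ofReal ‖p.1 - p.2‖) ^ (-α)) :=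
    ENNReal.continuous_rpow_const.measurable.comp
      ((measurable_fst.sub measurable_snd).norm.ennreal_ofReal)
  have hφx : ∀ x : Esp n, Measurable (fun y : Esp n => (ENNReal.ofReal ‖x - y‖) ^ (-α)) := by
    intro x
    exact ENNReal.continuous_rpow_const.measurable.comp
      ((measurable_const.sub measurable_id).norm.ennreal_ofReal)
  have hpt : ∀ x y : Esp n, (ENNReal.ofReal ‖δ • x - δ • y‖ : ℝ≥0∞) ^ (-α)
      = (ENNReal.ofReal δ) ^ (-α) * (ENNReal.ofReal ‖x - y‖) ^ (-α) := by
    intro x y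
    rw [← smul_sub, norm_smul, Real.norm_eq_abs, abs_of_pos hδ,
      ENNReal.ofReal_mul hδ.le,
      ENNReal.mul_rpow_of_ne_top ENNReal.ofReal_ne_top ENNReal.ofReal_ne_top]
  rw [energy, energy]
  rw [lintegral_map (by
    exact Measurable.lintegral_prod_right' (f := fun p : Esp n × Esp n =>
      (ENNReal.ofReal ‖p.1 - p.2‖) ^ (-α)) hφ) hT]
  have hstep : ∀ x : Esp n,
      ∫⁻ y, (ENNReal.ofReal ‖δ • x - y‖) ^ (-α) ∂(Measure.map (fun x : Esp n => δ • x) μ)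
        = (ENNReal.ofReal δ) ^ (-α) * ∫⁻ y, (ENNReal.ofReal ‖x - y‖) ^ (-α) ∂μ := by
    intro x
    rw [lintegral_map (hφx _) hT]
    rw [← lintegral_const_mul _ (hφx x)]
    congr 1
    funext y
    exact hpt x y
  calc ∫⁻ x, ∫⁻ y, (ENNReal.ofReal ‖δ • x - y‖) ^ (-α)
        ∂(Measure.map (fun x : Esp n => δ • x) μ) ∂μ
      = ∫⁻ x, (ENNReal.ofReal δ) ^ (-α)
          * ∫⁻ y, (ENNReal.ofReal ‖x - y‖) ^ (-α) ∂μ ∂μ := by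
        apply lintegral_congr hstep
    _ = (ENNReal.ofReal δ) ^ (-α) * ∫⁻ x, ∫⁻ y, (ENNReal.ofReal ‖x - y‖) ^ (-α) ∂μ ∂μ := by
        apply lintegral_const_mul
        exact Measurable.lintegral_prod_right' hφ

lemma measFT_lower (n : ℕ) {δ R : ℝ} (hδ : 0 < δ)
    (hRδ : R * δ = (32:ℝ)⁻¹) {ξ : Esp n} (hξ : ‖ξ‖ = 1) :
    (volume (closedBall (0:Esp n) 1)).toReal / 2
      ≤ ‖measFT (Measure.map (fun x : Esp n => δ • x)
          (volume.restrict (closedBall (0:Esp n) 1))) (R • ξ)‖ := by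
  set μ₀ : Measure (Esp n) := volume.restrict (closedBall (0:Esp n) 1) with hμ₀
  haveI : IsFiniteMeasure μ₀ := ⟨by
    rw [hμ₀, Measure.restrict_apply_univ]; exact measure_closedBall_lt_top⟩
  set m₀ : ℝ := (volume (closedBall (0:Esp n) 1)).toReal with hm₀
  have hm₀' : (μ₀ Set.univ).toReal = m₀ := by rw [hμ₀, Measure.restrict_apply_univ]
  have hm₀nn : 0 ≤ m₀ := ENNReal.toReal_nonneg
  have hT : Measurable (fun x : Esp n => δ • x) := (continuous_const_smul δ).measurable
  have hcont : Continuous (fun y : Esp n =>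
      Complex.exp (((-2 * π * (inner ℝ (R • ξ) y : ℝ) : ℝ) : ℂ) * Complex.I)) := by
    apply Complex.continuous_exp.comp
    apply Continuous.mul _ continuous_const
    apply Complex.continuous_ofReal.comp
    exact (continuous_const.mul (continuous_const.inner continuous_id))
  rw [measFT, integral_map hT.aemeasurable hcont.aestronglyMeasurable]
  set φ : Esp n → ℂ := fun y =>
    Complex.exp (((-2 * π * (inner ℝ (R • ξ) (δ • y) : ℝ) : ℝ) : ℂ) * Complex.I) with hφ
  have hφcont : Continuous φ := hcont.comp (continuous_const_smul δ)
  have hφnorm : ∀ y, ‖φ y‖ = 1 := by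
    intro y
    rw [hφ]
    exact Complex.norm_exp_ofReal_mul_I _
  have hφint : Integrable φ μ₀ := by
    apply Integrable.mono' (integrable_const (1:ℝ)) hφcont.aestronglyMeasurable
    filter_upwards with y
    rw [hφnorm y]
  have hbd : ∀ᵐ y ∂μ₀, ‖φ y - 1‖ ≤ 2⁻¹ := by
    filter_upwards [ae_restrict_mem measurableSet_closedBall] with y hy
    have hy1 : ‖y‖ ≤ 1 := mem_closedBall_zero_iff.1 hy
    have hin : (inner ℝ (R • ξ) (δ • y) : ℝ) = 32⁻¹ * (inner ℝ ξ y : ℝ) := by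
      rw [real_inner_smul_left, real_inner_smul_right, ← mul_assoc, hRδ]
    have hip : |(inner ℝ ξ y : ℝ)| ≤ 1 := by
      calc |(inner ℝ ξ y : ℝ)| ≤ ‖ξ‖ * ‖y‖ := abs_real_inner_le_norm ξ y
        _ ≤ 1 := by rw [hξ]; simpa using hy1
    have habs : ‖(((-2 * π * (inner ℝ (R • ξ) (δ • y) : ℝ) : ℝ) : ℂ) * Complex.I)‖
        ≤ π / 16 := by
      rw [norm_mul, Complex.norm_I, mul_one, Complex.norm_real, Real.norm_eq_abs, hin]
      calc |(-2 * π) * ((32:ℝ)⁻¹ * (inner ℝ ξ y : ℝ))|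
          = |(-2:ℝ)| * |π| * (|(32:ℝ)⁻¹| * |(inner ℝ ξ y : ℝ)|) := by
            rw [abs_mul, abs_mul, abs_mul]
        _ = 2 * π * (32⁻¹ * |(inner ℝ ξ y : ℝ)|) := by
            rw [abs_of_pos pi_pos]
            norm_num
        _ ≤ 2 * π * (32⁻¹ * 1) := by
            apply mul_le_mul_of_nonneg_left _ (by positivity)
            apply mul_le_mul_of_nonneg_left hip (by norm_num)
        _ = π / 16 := by ring
    have h1 : ‖(((-2 * π * (inner ℝ (R • ξ) (δ • y) : ℝ) : ℝ) : ℂ) * Complex.I)‖ ≤ 1 := by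
      refine habs.trans ?_
      have := pi_le_four
      linarith
    have := Complex.norm_exp_sub_one_le h1
    rw [hφ]
    refine this.trans ?_
    have := pi_le_four
    calc 2 * ‖(((-2 * π * (inner ℝ (R • ξ) (δ • y) : ℝ) : ℝ) : ℂ) * Complex.I)‖
        ≤ 2 * (π/16) := by linarith [habs]
      _ ≤ 2⁻¹ := by linarith
  have hsub : ‖(∫ y, φ y ∂μ₀) - (m₀ : ℂ)‖ ≤ 2⁻¹ * m₀ := by
    have hint1 : (∫ _y, (1:ℂ) ∂μ₀) = (m₀ : ℂ) := by
      rw [integral_const, measureReal_def, hm₀']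
      simp
    have : (∫ y, φ y ∂μ₀) - (m₀ : ℂ) = ∫ y, (φ y - 1) ∂μ₀ := by
      rw [integral_sub hφint (integrable_const _), hint1]
    rw [this]
    have := norm_integral_le_of_norm_le_const (μ := μ₀) (C := 2⁻¹) hbd
    rwa [measureReal_def, hm₀'] at this
  have hnorm : ‖(m₀ : ℂ)‖ = m₀ := by
    rw [Complex.norm_real, Real.norm_eq_abs, abs_of_nonneg hm₀nn]
  have htri : ‖(m₀:ℂ)‖ - ‖(∫ y, φ y ∂μ₀) - (m₀ : ℂ)‖ ≤ ‖∫ y, φ y ∂μ₀‖ := by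
    have := norm_sub_norm_le ((m₀:ℂ)) ((m₀:ℂ) - ((∫ y, φ y ∂μ₀)))
    have h2 : (m₀:ℂ) - ((m₀:ℂ) - (∫ y, φ y ∂μ₀)) = ∫ y, φ y ∂μ₀ := by ring
    rw [h2, norm_sub_rev] at this
    linarith
  rw [hnorm] at htri
  have : m₀/2 ≤ m₀ - 2⁻¹ * m₀ := by linarith
  linarith [hsub, htri]

/-- Proposition 8.3 (Wolff). -/
theorem stmt13 (n : ℕ) (hn : 2 ≤ n) (α : ℝ) (hα0 : 0 < α) (hαn : α < n) :
    ∀ β b : ℝ, α / 2 < β → 0 < b →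
      ∃ R : ℝ, 1 ≤ R ∧ ∃ μ : Measure (Esp n), IsFiniteMeasure μ ∧
        μ ((closedBall (0 : Esp n) 1)ᶜ) = 0 ∧ 0 < energy α μ ∧ energy α μ < ⊤ ∧
        ENNReal.ofReal b * (energy α μ) ^ (1 / 2 : ℝ)
          < ENNReal.ofReal (R ^ β) * eLpNorm (fun ξ => measFT μ (R • ξ)) 1 (sphσ n) := by
  intro β b hβ hb
  have hn1 : 1 ≤ n := by omega
  set B := closedBall (0 : Esp n) 1 with hBdef
  set μ₀ : Measure (Esp n) := volume.restrict B with hμ₀def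
  have hVpos : 0 < volume B :=
    lt_of_lt_of_le (measure_ball_pos volume 0 one_pos) (measure_mono ball_subset_closedBall)
  have hVlt : volume B < ⊤ := measure_closedBall_lt_top
  set m₀ : ℝ := (volume B).toReal with hm₀def
  have hm₀pos : 0 < m₀ := ENNReal.toReal_pos hVpos.ne' hVlt.ne
  have hE0pos : 0 < energy α μ₀ := energy_mu0_pos n α hα0
  have hE0lt : energy α μ₀ < ⊤ := energy_mu0_lt_top n hn1 α hα0 hαn
  set E1 : ℝ := (energy α μ₀).toReal with hE1def
  have hE1pos : 0 < E1 := ENNReal.toReal_pos hE0pos.ne' hE0lt.ne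
  have hS : 0 < sphσ n Set.univ := sphσ_univ_pos n hn
  set k : ℝ≥0∞ := min (sphσ n Set.univ) 1 with hkdef
  have hkpos : 0 < k := lt_min hS one_pos
  have hkne : k ≠ ⊤ := ((min_le_right _ _).trans_lt (by norm_num)).ne
  set k0 : ℝ := k.toReal with hk0def
  have hk0pos : 0 < k0 := ENNReal.toReal_pos hkpos.ne' hkne
  set γ : ℝ := β - α/2 with hγdef
  have hγ : 0 < γ := by rw [hγdef]; linarith
  set s : ℝ := E1 ^ (1/2 : ℝ) with hsdef
  have hs : 0 < s := Real.rpow_pos_of_pos hE1pos _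
  set c : ℝ := (32:ℝ)^(-β) * (m₀/2) * k0 / (b * s) with hcdef
  have hc : 0 < c := by
    apply div_pos
    · apply mul_pos (mul_pos (Real.rpow_pos_of_pos (by norm_num) _) (by linarith)) hk0pos
    · exact mul_pos hb hs
  set δ : ℝ := min (32:ℝ)⁻¹ (c^(1/γ:ℝ)/2) with hδdef
  have hδpos : 0 < δ := lt_min (by norm_num) (by positivity)
  have hδ32 : δ ≤ (32:ℝ)⁻¹ := min_le_left _ _
  set R : ℝ := (32*δ)⁻¹ with hRdef
  have h32δpos : 0 < 32*δ := by linarith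
  have h32δle : 32*δ ≤ 1 := by
    calc 32*δ ≤ 32 * (32:ℝ)⁻¹ := by linarith
      _ = 1 := by norm_num
  have hR1 : 1 ≤ R := by
    rw [hRdef]
    rw [le_inv_comm₀ one_pos h32δpos]
    simpa using h32δle
  have hRpos : 0 < R := lt_of_lt_of_le one_pos hR1
  have hRδ : R * δ = (32:ℝ)⁻¹ := by
    rw [hRdef]
    field_simp
  have hT : Measurable (fun x : Esp n => δ • x) := (continuous_const_smul δ).measurable
  set μδ : Measure (Esp n) := Measure.map (fun x : Esp n => δ • x) μ₀ with hμδdef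
  have hEδ : energy α μδ = ENNReal.ofReal (δ^(-α)) * ENNReal.ofReal E1 := by
    rw [hμδdef, energy_map_smul n α hδpos μ₀, ENNReal.ofReal_rpow_of_pos hδpos,
      ENNReal.ofReal_toReal hE0lt.ne]
  refine ⟨R, hR1, μδ, ?_, ?_, ?_, ?_, ?_⟩
  · constructor
    rw [hμδdef, Measure.map_apply hT MeasurableSet.univ, Set.preimage_univ, hμ₀def,
      Measure.restrict_apply_univ]
    exact hVlt
  · rw [hμδdef, Measure.map_apply hT measurableSet_closedBall.compl, hμ₀def,
      Measure.restrict_apply (hT measurableSet_closedBall.compl)]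
    have hempty : ((fun x : Esp n => δ • x) ⁻¹' Bᶜ) ∩ B = ∅ := by
      rw [Set.eq_empty_iff_forall_notMem]
      rintro y ⟨h1, h2⟩
      rw [Set.mem_preimage, Set.mem_compl_iff] at h1
      apply h1
      have hy1 : ‖y‖ ≤ 1 := mem_closedBall_zero_iff.1 h2
      rw [hBdef, mem_closedBall_zero_iff, norm_smul, Real.norm_eq_abs, abs_of_pos hδpos]
      calc δ * ‖y‖ ≤ (32:ℝ)⁻¹ * 1 := by
            apply mul_le_mul hδ32 hy1 (norm_nonneg _) (by norm_num)
        _ ≤ 1 := by norm_num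
    rw [hempty]
    exact measure_empty
  · rw [hEδ]
    exact ENNReal.mul_pos (ENNReal.ofReal_pos.2 (Real.rpow_pos_of_pos hδpos _)).ne'
      (ENNReal.ofReal_pos.2 hE1pos).ne'
  · rw [hEδ]
    exact ENNReal.mul_lt_top ENNReal.ofReal_lt_top ENNReal.ofReal_lt_top
  · -- the main inequality
    have hreal : b * ((δ^(-α) * E1) ^ (1/2:ℝ)) < R^β * ((m₀/2) * k0) := by
      have hsplit : ((δ^(-α) * E1) ^ (1/2:ℝ)) = δ^(-(α/2)) * s := by
        rw [Real.mul_rpow (Real.rpow_nonneg hδpos.le _) hE1pos.le, hsdef]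
        congr 1
        rw [← Real.rpow_mul hδpos.le]
        congr 1
        ring
      have hδγ : δ^γ < c := by
        have hle : δ ≤ c^(1/γ:ℝ)/2 := min_le_right _ _
        calc δ^γ ≤ (c^(1/γ:ℝ)/2)^γ := Real.rpow_le_rpow hδpos.le hle hγ.le
          _ < (c^(1/γ:ℝ))^γ := by
              apply Real.rpow_lt_rpow (by positivity) _ hγ
              exact half_lt_self (by positivity)
          _ = c := by
              rw [← Real.rpow_mul hc.le, one_div, inv_mul_cancel₀ hγ.ne', Real.rpow_one]
      have hkey : b * s * δ^γ < (32:ℝ)^(-β) * (m₀/2) * k0 := by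
        have hbs : (0:ℝ) < b * s := mul_pos hb hs
        have heq : b * s * c = (32:ℝ)^(-β) * (m₀/2) * k0 := by
          rw [hcdef]
          field_simp
        calc b * s * δ^γ < b * s * c := by
              exact mul_lt_mul_of_pos_left hδγ hbs
          _ = _ := heq
      have hδsplit : δ^(-(α/2)) = δ^γ * δ^(-β) := by
        rw [← Real.rpow_add hδpos]
        congr 1
        rw [hγdef]; ring
      have hRβ : R^β = (32:ℝ)^(-β) * δ^(-β) := by
        rw [hRdef, Real.inv_rpow h32δpos.le, ← Real.rpow_neg h32δpos.le,
          Real.mul_rpow (by norm_num : (0:ℝ) ≤ 32) hδpos.le]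
      calc b * ((δ^(-α) * E1) ^ (1/2:ℝ)) = (b * s * δ^γ) * δ^(-β) := by
            rw [hsplit, hδsplit]; ring
        _ < ((32:ℝ)^(-β) * (m₀/2) * k0) * δ^(-β) := by
            exact mul_lt_mul_of_pos_right hkey (Real.rpow_pos_of_pos hδpos _)
        _ = R^β * ((m₀/2) * k0) := by rw [hRβ]; ring
    have hFTbd : ∀ᵐ ξ ∂(sphσ n), ENNReal.ofReal (m₀/2) ≤ (‖measFT μδ (R • ξ)‖₊ : ℝ≥0∞) := by
      have hσ : sphσ n = (μH[(n : ℝ) - 1]).restrict (sphere (0 : Esp n) 1) := rfl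
      rw [hσ]
      filter_upwards [ae_restrict_mem (Metric.isClosed_sphere).measurableSet] with ξ hξ
      have hξ1 : ‖ξ‖ = 1 := mem_sphere_zero_iff_norm.1 hξ
      have := measFT_lower n hδpos hRδ hξ1
      rw [← enorm_eq_nnnorm, ← ofReal_norm]
      apply ENNReal.ofReal_le_ofReal
      exact this
    calc ENNReal.ofReal b * (energy α μδ) ^ (1/2:ℝ)
        = ENNReal.ofReal (b * ((δ^(-α) * E1) ^ (1/2:ℝ))) := by
          rw [hEδ, ← ENNReal.ofReal_mul (by positivity),
            ENNReal.ofReal_rpow_of_pos (by positivity), ← ENNReal.ofReal_mul hb.le]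
      _ < ENNReal.ofReal (R^β * ((m₀/2) * k0)) := by
          rw [ENNReal.ofReal_lt_ofReal_iff (by positivity)]
          exact hreal
      _ ≤ ENNReal.ofReal (R^β) * eLpNorm (fun ξ => measFT μδ (R • ξ)) 1 (sphσ n) := by
          rw [ENNReal.ofReal_mul (by positivity)]
          apply mul_le_mul_right
          calc ENNReal.ofReal ((m₀/2) * k0)
              = ENNReal.ofReal (m₀/2) * ENNReal.ofReal k0 := by
                rw [ENNReal.ofReal_mul (by linarith)]
            _ = ENNReal.ofReal (m₀/2) * k := by rw [hk0def, ENNReal.ofReal_toReal hkne]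
            _ ≤ ENNReal.ofReal (m₀/2) * sphσ n Set.univ :=
                mul_le_mul_right (min_le_left _ _) _
            _ = ∫⁻ _ξ, ENNReal.ofReal (m₀/2) ∂(sphσ n) := by rw [lintegral_const]
            _ ≤ ∫⁻ ξ, (‖measFT μδ (R • ξ)‖₊ : ℝ≥0∞) ∂(sphσ n) := lintegral_mono_ae hFTbd
            _ = eLpNorm (fun ξ => measFT μδ (R • ξ)) 1 (sphσ n) :=
                (eLpNorm_one_eq_lintegral_enorm (f := fun ξ => measFT μδ (R • ξ))).symm
end
end
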